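/- arXiv:1504.05428 — 4 statements merged into one kernel-verified Lean document; each statement's English description precedes it below -/
import Mathlib

section
/- For a polynomial C with dual quaternion coefficients (indeterminate commuting with coefficients), the norm polynomial C·conj(C) has all coefficients in the subalgebra of dual numbers (real span of 1 and ε). -/
open Polynomial TrivSqZeroExt
open scoped Quaternion

/-- Conjugation of a dual quaternion `h = p + εq`: `conj h = conj p + ε conj q`. -/
noncomputable def dconj (h : DualNumber ℍ[ℝ]) : DualNumber ℍ[ℝ] :=
  inl (star h.fst) + inl (star h.snd) * DualNumber.eps

/-- Coefficientwise conjugation of a polynomial with dual quaternion coefficients. -/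
noncomputable def dconjPoly (C : (DualNumber ℍ[ℝ])[X]) : (DualNumber ℍ[ℝ])[X] :=
  ∑ i ∈ C.support, Polynomial.C (dconj (C.coeff i)) * Polynomial.X ^ i


@[simp] lemma dconj_fst (h : DualNumber ℍ[ℝ]) : (dconj h).fst = star h.fst := by
  simp [dconj]

@[simp] lemma dconj_snd (h : DualNumber ℍ[ℝ]) : (dconj h).snd = star h.snd := by
  simp [dconj, TrivSqZeroExt.snd_mul]

@[simp] lemma dconj_zero : dconj 0 = 0 := by
  apply TrivSqZeroExt.ext <;> simp

lemma coeff_dconjPoly (C : (DualNumber ℍ[ℝ])[X]) (j : ℕ) :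
    (dconjPoly C).coeff j = dconj (C.coeff j) := by
  rw [dconjPoly, Polynomial.finset_sum_coeff]
  simp only [Polynomial.coeff_C_mul, Polynomial.coeff_X_pow, mul_ite, mul_one, mul_zero]
  rw [Finset.sum_ite_eq C.support j (fun i => dconj (C.coeff i))]
  by_cases h : j ∈ C.support
  · simp [h]
  · simp [h, Polynomial.notMem_support_iff.mp h]

lemma dconj_mul (h k : DualNumber ℍ[ℝ]) : dconj (h * k) = dconj k * dconj h := by
  apply TrivSqZeroExt.ext
  · simp [star_mul]
  · simp [TrivSqZeroExt.snd_mul, star_mul, add_comm]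

lemma dconj_dconj (h : DualNumber ℍ[ℝ]) : dconj (dconj h) = h := by
  apply TrivSqZeroExt.ext <;> simp

noncomputable def dconjHom : DualNumber ℍ[ℝ] →+ DualNumber ℍ[ℝ] where
  toFun := dconj
  map_zero' := dconj_zero
  map_add' h k := by apply TrivSqZeroExt.ext <;> simp

/-- All coefficients of the norm polynomial `C ⬝ conj C` of a dual quaternion
polynomial lie in the real span of `1` and `ε`, i.e. they are dual numbers. -/
theorem normPoly_coeff_dualNumber (C : (DualNumber ℍ[ℝ])[X]) :
    ∀ n : ℕ, ∃ a b : ℝ,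
      (C * dconjPoly C).coeff n = a • (1 : DualNumber ℍ[ℝ]) + b • DualNumber.eps := by
  intro n
  set S := (C * dconjPoly C).coeff n with hS
  have hd : dconj S = S := by
    rw [hS, Polynomial.coeff_mul]
    simp only [coeff_dconjPoly]
    rw [show dconj = dconjHom from rfl, map_sum]
    simp only [dconjHom, AddMonoidHom.coe_mk, ZeroHom.coe_mk, dconj_mul, dconj_dconj]
    conv_rhs => rw [← Finset.HasAntidiagonal.map_swap_antidiagonal (n := n)]
    rw [Finset.sum_map]
    simp
  have h1 : star S.fst = S.fst := by rw [← dconj_fst, hd]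
  have h2 : star S.snd = S.snd := by rw [← dconj_snd, hd]
  refine ⟨S.fst.re, S.snd.re, ?_⟩
  apply TrivSqZeroExt.ext
  · rw [TrivSqZeroExt.fst_add, TrivSqZeroExt.fst_smul, TrivSqZeroExt.fst_smul,
      TrivSqZeroExt.fst_one, DualNumber.fst_eps, smul_zero, add_zero]
    rw [Algebra.smul_def, mul_one, show (algebraMap ℝ ℍ[ℝ]) (fst S).re = ((fst S).re : ℍ[ℝ]) from rfl]
    exact Quaternion.star_eq_self.mp h1
  · rw [TrivSqZeroExt.snd_add, TrivSqZeroExt.snd_smul, TrivSqZeroExt.snd_smul,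
      TrivSqZeroExt.snd_one, DualNumber.snd_eps, smul_zero, zero_add]
    rw [Algebra.smul_def, mul_one, show (algebraMap ℝ ℍ[ℝ]) (snd S).re = ((snd S).re : ℍ[ℝ]) from rfl]
    exact Quaternion.star_eq_self.mp h2
end

section
/- Let C be a quaternion polynomial and M a monic quadratic real polynomial irreducible over ℝ that divides the real polynomial C·conj(C). Then M and C have a common left divisor of positive degree in ℍ[t]. -/
open Polynomial
open scoped Quaternion

/-- Coefficientwise conjugation of a quaternion polynomial. -/
noncomputable def qconj (P : ℍ[ℝ][X]) : ℍ[ℝ][X] :=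
  ∑ i ∈ P.support, Polynomial.C (star (P.coeff i)) * Polynomial.X ^ i

lemma qconj_coeff (P : ℍ[ℝ][X]) (n : ℕ) : (qconj P).coeff n = star (P.coeff n) := by
  rw [qconj, finset_sum_coeff]
  simp only [coeff_C_mul, coeff_X_pow, mul_ite, mul_one, mul_zero]
  rw [Finset.sum_ite_eq P.support n fun i => star (P.coeff i)]
  by_cases h : n ∈ P.support
  · simp [h]
  · simp [h, Polynomial.notMem_support_iff.mp h]

lemma qconj_mul (P Q : ℍ[ℝ][X]) : qconj (P * Q) = qconj Q * qconj P := by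
  refine Polynomial.ext fun n => ?_
  rw [qconj_coeff, coeff_mul, coeff_mul, star_sum]
  have h : ∀ p ∈ Finset.HasAntidiagonal.antidiagonal n, star (P.coeff p.1 * Q.coeff p.2)
      = (fun q : ℕ × ℕ => star (Q.coeff q.1) * star (P.coeff q.2)) p.swap := by
    intro p _; simp
  exact (Finset.sum_congr rfl h).trans
    ((Finset.Nat.sum_antidiagonal_swap
      (f := fun q : ℕ × ℕ => star (Q.coeff q.1) * star (P.coeff q.2))).trans
    (Finset.sum_congr rfl fun p _ => by simp [qconj_coeff]))

lemma qconj_add (P Q : ℍ[ℝ][X]) : qconj (P + Q) = qconj P + qconj Q := by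
  refine Polynomial.ext fun n => ?_
  simp [qconj_coeff]

lemma qconj_qconj (P : ℍ[ℝ][X]) : qconj (qconj P) = P := by
  refine Polynomial.ext fun n => ?_
  simp [qconj_coeff]

lemma qconj_zero : qconj 0 = 0 := by simp [qconj]

lemma qconj_map (M : ℝ[X]) :
    qconj (M.map (algebraMap ℝ ℍ[ℝ])) = M.map (algebraMap ℝ ℍ[ℝ]) := by
  refine Polynomial.ext fun n => ?_
  rw [qconj_coeff, coeff_map]
  simp [Quaternion.algebraMap_def]

lemma degree_qconj_le (P : ℍ[ℝ][X]) : (qconj P).degree ≤ P.degree :=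
  (degree_le_iff_coeff_zero _ _).2 fun m hm => by
    rw [qconj_coeff, coeff_eq_zero_of_degree_lt hm, star_zero]

lemma degree_qconj (P : ℍ[ℝ][X]) : (qconj P).degree = P.degree :=
  le_antisymm (degree_qconj_le P) (by
    calc P.degree = (qconj (qconj P)).degree := by rw [qconj_qconj]
    _ ≤ (qconj P).degree := degree_qconj_le _)

lemma central_commute (a : ℍ[ℝ][X])
    (h : ∀ i, (a.coeff i) ∈ Set.range (algebraMap ℝ ℍ[ℝ])) (p : ℍ[ℝ][X]) : a * p = p * a := by
  refine Polynomial.ext fun n => ?_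
  rw [coeff_mul, coeff_mul]
  have h2 : ∀ q ∈ Finset.HasAntidiagonal.antidiagonal n, a.coeff q.1 * p.coeff q.2
      = (fun q : ℕ × ℕ => p.coeff q.1 * a.coeff q.2) q.swap := by
    intro q _
    obtain ⟨r, hr⟩ := h q.1
    simp only [Prod.fst_swap, Prod.snd_swap, ← hr]
    exact (Algebra.commutes r _)
  exact (Finset.sum_congr rfl h2).trans
    (Finset.Nat.sum_antidiagonal_swap (f := fun q : ℕ × ℕ => p.coeff q.1 * a.coeff q.2))

/-- If a monic quadratic real polynomial `M`, irreducible over ℝ, divides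
`C ⬝ conj C`, then `M` and `C` have a common left divisor of positive degree. -/
theorem left_gcd_of_irreducible_quadratic_dvd_norm (C : ℍ[ℝ][X]) (M : ℝ[X])
    (hM : M.Monic) (hdeg : M.degree = 2) (hirr : Irreducible M)
    (hdvd : M.map (algebraMap ℝ ℍ[ℝ]) ∣ C * qconj C) :
    ∃ L : ℍ[ℝ][X], 0 < L.degree ∧ L ∣ M.map (algebraMap ℝ ℍ[ℝ]) ∧ L ∣ C := by
  set f := algebraMap ℝ ℍ[ℝ]
  set Mf : ℍ[ℝ][X] := M.map f with hMf_def
  have hMf : Mf.Monic := hM.map f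
  have hMfdeg : Mf.degree = 2 := by
    rw [hMf_def, degree_map_eq_of_injective (RingHom.injective f), hdeg]
  have hcen : ∀ p : ℍ[ℝ][X], Mf * p = p * Mf :=
    central_commute Mf (fun i => ⟨M.coeff i, (Polynomial.coeff_map f i).symm⟩)
  set Q : ℍ[ℝ][X] := C /ₘ Mf with hQ_def
  set R : ℍ[ℝ][X] := C %ₘ Mf with hR_def
  have hCR : C = Mf * Q + R := by
    rw [hQ_def, hR_def, add_comm]; exact (modByMonic_add_div C Mf).symm
  have hRdeg : R.degree < 2 := hMfdeg ▸ degree_modByMonic_lt C hMf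
  -- Mf divides R * qconj R
  obtain ⟨W, hW⟩ := hdvd
  have key : Mf * W = Mf * (Q * qconj Q * Mf + Q * qconj R + R * qconj Q) + R * qconj R := by
    rw [← hW]
    conv_lhs => rw [hCR]
    rw [qconj_add, qconj_mul, qconj_map]
    have h1 : R * (qconj Q * Mf) = Mf * (R * qconj Q) := by
      rw [← mul_assoc]; exact (hcen _).symm
    rw [add_mul, mul_add, mul_add, h1, mul_add, mul_add]
    simp only [mul_assoc, add_assoc]
    rfl
  have hdvd2 : R * qconj R = Mf * (W - (Q * qconj Q * Mf + Q * qconj R + R * qconj Q)) := by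
    rw [mul_sub, key, add_sub_cancel_left]
  by_cases hR0 : R = 0
  · refine ⟨Mf, ?_, dvd_refl _, ⟨Q, by rw [hCR, hR0, add_zero]⟩⟩
    rw [hMfdeg]; norm_num
  · set Q' : ℍ[ℝ][X] := W - (Q * qconj Q * Mf + Q * qconj R + R * qconj Q) with hQ'_def
    have hqR : qconj R ≠ 0 := fun h => hR0 (by rw [← qconj_qconj R, h, qconj_zero])
    have hRR0 : R * qconj R ≠ 0 := mul_ne_zero hR0 hqR
    have hQ'0 : Q' ≠ 0 := fun h => hRR0 (by rw [hdvd2, h, mul_zero])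
    have hMf0 : Mf ≠ 0 := hMf.ne_zero
    have hnd : (qconj R).natDegree = R.natDegree := by
      unfold Polynomial.natDegree; rw [degree_qconj]
    have hMfnd : Mf.natDegree = 2 := by
      have := Polynomial.natDegree_eq_of_degree_eq_some hMfdeg
      exact_mod_cast this
    have hdeg_eq : R.natDegree + R.natDegree = 2 + Q'.natDegree := by
      have := congrArg Polynomial.natDegree hdvd2
      rwa [natDegree_mul hR0 hqR, natDegree_mul hMf0 hQ'0, hnd, hMfnd] at this
    have hRnd_lt : R.natDegree < 2 := by
      rw [← hMfnd]
      exact natDegree_lt_natDegree hR0 (hMfdeg ▸ hRdeg)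
    have hRnd : R.natDegree = 1 := by omega
    have hQ'nd : Q'.natDegree = 0 := by omega
    obtain ⟨q, hq⟩ : ∃ q : ℍ[ℝ], Polynomial.C q = Q' :=
      ⟨Q'.coeff 0, (Polynomial.eq_C_of_natDegree_eq_zero hQ'nd).symm⟩
    have hq0 : q ≠ 0 := fun h => hQ'0 (by rw [← hq, h, map_zero])
    have hMfeq : Mf = R * (qconj R * Polynomial.C q⁻¹) := by
      have h2 : Mf * Q' * Polynomial.C q⁻¹ = Mf := by
        rw [← hq, mul_assoc, ← Polynomial.C_mul, mul_inv_cancel₀ hq0, Polynomial.C_1, mul_one]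
      calc Mf = Mf * Q' * Polynomial.C q⁻¹ := h2.symm
        _ = R * qconj R * Polynomial.C q⁻¹ := by rw [hdvd2]
        _ = R * (qconj R * Polynomial.C q⁻¹) := mul_assoc _ _ _
    refine ⟨R, ?_, ⟨qconj R * Polynomial.C q⁻¹, hMfeq⟩,
      ⟨qconj R * Polynomial.C q⁻¹ * Q + 1, ?_⟩⟩
    · rw [degree_eq_natDegree hR0, hRnd]; norm_num
    · rw [mul_add, mul_one, ← mul_assoc, ← hMfeq, hCR]
end

section
/- Let A, B be quaternion polynomials and let M be a monic quadratic real polynomial irreducible over ℝ dividing the product A·B. Then either M divides A, or M divides B, or there exists a quaternion q with M = (t - q)(t - conj(q)) and quaternion polynomials A₁, B₁ such that A = A₁·(t - q) and B = (t - conj(q))·B₁. -/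
open Polynomial
open scoped Quaternion

lemma C_real_comm (r : ℝ) (P : ℍ[ℝ][X]) :
    C ((algebraMap ℝ ℍ[ℝ]) r) * P = P * C ((algebraMap ℝ ℍ[ℝ]) r) := by
  refine Polynomial.ext fun n => ?_
  rw [coeff_C_mul, coeff_mul_C]
  exact Algebra.commutes (A := ℍ[ℝ]) r _

lemma map_real_comm (M : ℝ[X]) (P : ℍ[ℝ][X]) :
    M.map (algebraMap ℝ ℍ[ℝ]) * P = P * M.map (algebraMap ℝ ℍ[ℝ]) := by
  induction M using Polynomial.induction_on' with
  | add p q hp hq => simp [Polynomial.map_add, add_mul, mul_add, hp, hq]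
  | monomial n a =>
      rw [Polynomial.map_monomial, ← C_mul_X_pow_eq_monomial, mul_assoc,
        X_pow_mul, ← mul_assoc, C_real_comm, mul_assoc]

lemma expand_pair (q p : ℍ[ℝ]) :
    (X - C q) * (X - C p) = X ^ 2 - (C q + C p) * X + C (q * p) := by
  rw [mul_sub, sub_mul, sub_mul, show (X : ℍ[ℝ][X]) * C p = C p * X from X_mul,
    ← C_mul]
  noncomm_ring

lemma X_sub_C_star_comm (q : ℍ[ℝ]) :
    (X - C q) * (X - C (star q)) = (X - C (star q)) * (X - C q) := by
  rw [expand_pair, expand_pair, add_comm (C q), star_comm_self']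

lemma quat_dichotomy (q p : ℍ[ℝ]) (r₀ r₁ : ℝ) (h1 : q + p = (r₀ : ℍ[ℝ]))
    (h2 : q * p = (r₁ : ℍ[ℝ])) : q = (q.re : ℍ[ℝ]) ∨ p = star q := by
  have hp : p = (r₀ : ℍ[ℝ]) - q := eq_sub_of_add_eq' h1
  subst hp
  by_cases hr : r₀ = 2 * q.re
  · right
    rw [Quaternion.star_eq_two_re_sub, hr]
  · left
    have hr' : r₀ - 2 * q.re ≠ 0 := sub_ne_zero.mpr hr
    have hI := congrArg QuaternionAlgebra.imI h2
    have hJ := congrArg QuaternionAlgebra.imJ h2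
    have hK := congrArg QuaternionAlgebra.imK h2
    simp [Quaternion.imI_mul, Quaternion.imJ_mul, Quaternion.imK_mul] at hI hJ hK
    have eI : q.imI * (r₀ - 2 * q.re) = 0 := by linear_combination hI
    have eJ : q.imJ * (r₀ - 2 * q.re) = 0 := by linear_combination hJ
    have eK : q.imK * (r₀ - 2 * q.re) = 0 := by linear_combination hK
    have hI0 : q.imI = 0 := by rcases mul_eq_zero.mp eI with h | h; exact h; exact absurd h hr'
    have hJ0 : q.imJ = 0 := by rcases mul_eq_zero.mp eJ with h | h; exact h; exact absurd h hr'
    have hK0 : q.imK = 0 := by rcases mul_eq_zero.mp eK with h | h; exact h; exact absurd h hr'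
    ext <;> simp [hI0, hJ0, hK0]

/-- Lemma 1 of the paper: if a monic quadratic irreducible real polynomial `M`
divides a product `A ⬝ B` of quaternion polynomials, then `M ∣ A`, or `M ∣ B`, or
there is a quaternion `q` with `M = (t - q)(t - conj q)`, `A = A₁ (t - q)` and
`B = (t - conj q) B₁`. -/
theorem irreducible_quadratic_dvd_mul (A B : ℍ[ℝ][X]) (M : ℝ[X])
    (hM : M.Monic) (hdeg : M.degree = 2) (hirr : Irreducible M)
    (hdvd : M.map (algebraMap ℝ ℍ[ℝ]) ∣ A * B) :
    M.map (algebraMap ℝ ℍ[ℝ]) ∣ A ∨ M.map (algebraMap ℝ ℍ[ℝ]) ∣ B ∨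
      ∃ q : ℍ[ℝ], ∃ A₁ B₁ : ℍ[ℝ][X],
        M.map (algebraMap ℝ ℍ[ℝ]) =
          (Polynomial.X - Polynomial.C q) * (Polynomial.X - Polynomial.C (star q)) ∧
        A = A₁ * (Polynomial.X - Polynomial.C q) ∧
        B = (Polynomial.X - Polynomial.C (star q)) * B₁ := by

  set f := algebraMap ℝ ℍ[ℝ] with hf
  by_cases hA : M.map f ∣ A
  · exact Or.inl hA
  by_cases hB : M.map f ∣ B
  · exact Or.inr (Or.inl hB)
  right; right
  have comm : ∀ P : ℍ[ℝ][X], M.map f * P = P * M.map f := map_real_comm M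
  have hM'monic : (M.map f).Monic := hM.map f
  have hfinj : Function.Injective f := RingHom.injective f
  have hdegM' : (M.map f).degree = 2 := by
    rw [degree_map_eq_of_injective hfinj, hdeg]
  have hndM' : (M.map f).natDegree = 2 := natDegree_eq_of_degree_eq_some hdegM'
  obtain ⟨R_A, Q_A, hA_eq, hdegRA⟩ :
      ∃ R Q : ℍ[ℝ][X], A = R + M.map f * Q ∧ R.degree < 2 :=
    ⟨A %ₘ M.map f, A /ₘ M.map f, (modByMonic_add_div A (M.map f)).symm,
      hdegM' ▸ degree_modByMonic_lt A hM'monic⟩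
  obtain ⟨R_B, Q_B, hB_eq, hdegRB⟩ :
      ∃ R Q : ℍ[ℝ][X], B = R + M.map f * Q ∧ R.degree < 2 :=
    ⟨B %ₘ M.map f, B /ₘ M.map f, (modByMonic_add_div B (M.map f)).symm,
      hdegM' ▸ degree_modByMonic_lt B hM'monic⟩
  have hRA_ne : R_A ≠ 0 := by
    rintro rfl
    exact hA ⟨Q_A, by simpa using hA_eq⟩
  have hRB_ne : R_B ≠ 0 := by
    rintro rfl
    exact hB ⟨Q_B, by simpa using hB_eq⟩
  -- M' divides R_A * R_B
  obtain ⟨K, hK⟩ := hdvd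
  obtain ⟨S, hS⟩ : M.map f ∣ R_A * R_B := by
    refine ⟨K - A * Q_B - Q_A * B + Q_A * (M.map f * Q_B), ?_⟩
    have e1 : M.map f * (A * Q_B) = A * (M.map f * Q_B) := by
      rw [← mul_assoc, comm A, mul_assoc]
    rw [mul_add, mul_sub, mul_sub, ← hK, e1, ← mul_assoc (M.map f) Q_A B,
      ← mul_assoc (M.map f) Q_A (M.map f * Q_B)]
    have hra : R_A = A - M.map f * Q_A := by
      rw [hA_eq]; exact (add_sub_cancel_right _ _).symm
    have hrb : R_B = B - M.map f * Q_B := by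
      rw [hB_eq]; exact (add_sub_cancel_right _ _).symm
    rw [hra, hrb]
    noncomm_ring
  -- degrees
  have hS_ne : S ≠ 0 := by
    rintro rfl
    rw [mul_zero] at hS
    exact (mul_ne_zero hRA_ne hRB_ne) hS
  have hndRA : R_A.natDegree < 2 := by
    rw [natDegree_lt_iff_degree_lt hRA_ne]; exact_mod_cast hdegRA
  have hndRB : R_B.natDegree < 2 := by
    rw [natDegree_lt_iff_degree_lt hRB_ne]; exact_mod_cast hdegRB
  have hsum : R_A.natDegree + R_B.natDegree = 2 + S.natDegree := by
    rw [← natDegree_mul hRA_ne hRB_ne, hS, natDegree_mul (hM'monic.ne_zero) hS_ne, hndM']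
  have hndRA1 : R_A.natDegree = 1 := by omega
  have hndRB1 : R_B.natDegree = 1 := by omega
  have hndS0 : S.natDegree = 0 := by omega
  -- factor R_A, R_B
  set a₁ := R_A.coeff 1 with ha₁def
  set b₁ := R_B.coeff 1 with hb₁def
  have ha₁ : a₁ ≠ 0 := by
    have := leadingCoeff_ne_zero.mpr hRA_ne
    rwa [leadingCoeff, hndRA1] at this
  have hb₁ : b₁ ≠ 0 := by
    have := leadingCoeff_ne_zero.mpr hRB_ne
    rwa [leadingCoeff, hndRB1] at this
  set q := -(a₁⁻¹ * R_A.coeff 0) with hqdef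
  set p := -(R_B.coeff 0 * b₁⁻¹) with hpdef
  have hRA_fact : R_A = C a₁ * (X - C q) := by
    rw [mul_sub, ← C_mul, hqdef, mul_neg, mul_inv_cancel_left₀ ha₁, C_neg, sub_neg_eq_add]
    exact eq_X_add_C_of_degree_le_one (by rw [degree_eq_natDegree hRA_ne, hndRA1]; exact_mod_cast le_refl 1)
  have hRB_fact : R_B = (X - C p) * C b₁ := by
    rw [sub_mul, show (X : ℍ[ℝ][X]) * C b₁ = C b₁ * X from X_mul, ← C_mul, hpdef,
      neg_mul, inv_mul_cancel_right₀ hb₁, C_neg, sub_neg_eq_add]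
    exact eq_X_add_C_of_degree_le_one (by rw [degree_eq_natDegree hRB_ne, hndRB1]; exact_mod_cast le_refl 1)
  set s := S.coeff 0 with hsdef
  have hS_eq : S = C s := eq_C_of_natDegree_eq_zero hndS0
  -- key equation
  have h5 : C a₁ * ((X - C q) * (X - C p)) * C b₁ = M.map f * C s := by
    rw [← hS_eq, ← hS, hRA_fact, hRB_fact]
    noncomm_ring
  have h6 : (X - C q) * (X - C p) = M.map f * C (a₁⁻¹ * s * b₁⁻¹) := by
    have e : (X - C q) * (X - C p)
        = C a₁⁻¹ * (C a₁ * ((X - C q) * (X - C p)) * C b₁) * C b₁⁻¹ := by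
      rw [← mul_assoc, ← mul_assoc, ← C_mul, inv_mul_cancel₀ ha₁, C_1, one_mul,
        mul_assoc, mul_assoc, ← C_mul, mul_inv_cancel₀ hb₁, C_1, mul_one]
    rw [e, h5, ← mul_assoc, ← comm (C a₁⁻¹), mul_assoc, mul_assoc, ← C_mul, ← C_mul,
      ← mul_assoc]
  have hmonu : ((X - C q) * (X - C p)).Monic := (monic_X_sub_C q).mul (monic_X_sub_C p)
  have hc1 : a₁⁻¹ * s * b₁⁻¹ = 1 := by
    have := congrArg leadingCoeff h6
    rwa [hmonu.leadingCoeff, leadingCoeff_mul, hM'monic.leadingCoeff, one_mul,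
      leadingCoeff_C, eq_comm] at this
  have hkey : (X - C q) * (X - C p) = M.map f := by
    rw [h6, hc1, C_1, mul_one]
  -- coefficient equations
  have hexp : X ^ 2 - (C q + C p) * X + C (q * p) = M.map f := by
    rw [← expand_pair, hkey]
  have h0 : q * p = ((M.coeff 0 : ℝ) : ℍ[ℝ]) := by
    have := congrArg (fun P => coeff P 0) hexp
    simpa [coeff_X_pow, coeff_mul_X_zero, coeff_map, hf] using this
  have h1 : q + p = ((-M.coeff 1 : ℝ) : ℍ[ℝ]) := by
    have h := congrArg (fun P => coeff P 1) hexp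
    rw [coeff_add, coeff_sub, coeff_X_pow, show ((1:ℕ) = 0 + 1) from rfl, coeff_mul_X,
      coeff_add, coeff_C_zero, coeff_C_zero, coeff_C, coeff_map] at h
    simp only [if_neg (by norm_num : ¬(0+1 = 2)), if_neg (by norm_num : ¬(0+1 = 0))] at h
    have h' : -(q + p) = f (M.coeff (0+1)) := by simpa using h
    calc q + p = -(f (M.coeff (0+1))) := by rw [← h', neg_neg]
      _ = ((-M.coeff 1 : ℝ) : ℍ[ℝ]) := by
          rw [← map_neg]
          rfl
  have hndM : M.natDegree = 2 := natDegree_eq_of_degree_eq_some hdeg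
  rcases quat_dichotomy q p (-M.coeff 1) (M.coeff 0) h1 h0 with hqre | hpq
  · -- q is real: contradiction with irreducibility
    exfalso
    set a := q.re with hadef
    have hpreal : p = ((-M.coeff 1 - a : ℝ) : ℍ[ℝ]) := by
      rw [hqre] at h1
      rw [eq_sub_of_add_eq' h1]
      push_cast
      ring
    have hreal : a * (-M.coeff 1 - a) = M.coeff 0 := by
      apply Quaternion.coe_injective
      rw [Quaternion.coe_mul, ← h0, hqre, hpreal]
    have hroot : M.IsRoot a := by
      unfold IsRoot
      rw [eval_eq_sum_range, hndM]
      rw [Finset.sum_range_succ, Finset.sum_range_succ, Finset.sum_range_one]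
      rw [show M.coeff 2 = 1 from hndM ▸ hM.coeff_natDegree]
      linear_combination -hreal
    obtain ⟨g, hg⟩ := dvd_iff_isRoot.mpr hroot
    rcases hirr.isUnit_or_isUnit hg with hu | hu
    · have := degree_eq_zero_of_isUnit hu
      rw [degree_X_sub_C] at this
      exact one_ne_zero this
    · have hdg : g.degree = 0 := degree_eq_zero_of_isUnit hu
      have : M.degree = 1 := by
        rw [hg, degree_mul, degree_X_sub_C, hdg]
        rfl
      rw [hdeg] at this
      exact (by norm_num : (2 : WithBot ℕ) ≠ 1) this
  · -- main case
    have hkey' : (X - C q) * (X - C (star q)) = M.map f := by rw [← hpq]; exact hkey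
    have hRB_fact' : R_B = (X - C (star q)) * C b₁ := by rw [← hpq]; exact hRB_fact
    refine ⟨q, C a₁ + Q_A * (X - C (star q)), C b₁ + (X - C q) * Q_B, hkey'.symm, ?_, ?_⟩
    · rw [add_mul, mul_assoc Q_A, ← X_sub_C_star_comm q, hkey', ← comm Q_A,
        ← hRA_fact, ← hA_eq]
    · rw [mul_add, ← mul_assoc, ← X_sub_C_star_comm q, hkey', ← hRB_fact', ← hB_eq]
end

section
/- Let x₀, x₁, x₂, x₃ ∈ ℝ[t] be coprime (gcd of all four has degree zero). Then deg gcd(x₀, x₁² + x₂² + x₃²) is even. -/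
open Polynomial
open scoped Quaternion

lemma even_natDegree_of_no_real_root : ∀ n : ℕ, ∀ p : ℝ[X], p.natDegree = n → p ≠ 0 →
    (∀ r : ℝ, ¬ p.IsRoot r) → Even p.natDegree := by
  intro n
  induction n using Nat.strong_induction_on with
  | _ n ih =>
    intro p hdeg hp0 hroot
    rcases Nat.eq_zero_or_pos n with h0 | hpos
    · rw [hdeg, h0]; exact Even.zero
    · have hnu : ¬ IsUnit p := by
        intro hu
        have := Polynomial.natDegree_eq_zero_of_isUnit hu
        omega
      obtain ⟨q, hqirr, hqdvd⟩ := WfDvdMonoid.exists_irreducible_factor hnu hp0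
      have hq2 : q.degree ≤ 2 := hqirr.degree_le_two
      have hq0 : q ≠ 0 := hqirr.ne_zero
      have hqpos : 0 < q.natDegree := by
        rcases Nat.eq_zero_or_pos q.natDegree with h | h
        · exact absurd (Polynomial.isUnit_iff_degree_eq_zero.mpr
            (by rw [Polynomial.degree_eq_natDegree hq0, h]; rfl)) hqirr.not_isUnit
        · exact h
      have hqnat2 : q.natDegree ≤ 2 := Polynomial.natDegree_le_iff_degree_le.mpr hq2
      have hq1 : q.natDegree ≠ 1 := by
        intro h1
        obtain ⟨x, hx⟩ := Polynomial.exists_root_of_degree_eq_one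
          (by rw [Polynomial.degree_eq_natDegree hq0, h1]; rfl)
        obtain ⟨c, rfl⟩ := hqdvd
        exact hroot x (by simp [Polynomial.IsRoot, hx.eq_zero])
      have hqd : q.natDegree = 2 := by omega
      obtain ⟨c, rfl⟩ := hqdvd
      have hc0 : c ≠ 0 := fun h => hp0 (by simp [h])
      have hdc : (q * c).natDegree = q.natDegree + c.natDegree :=
        Polynomial.natDegree_mul hq0 hc0
      have hcroot : ∀ r : ℝ, ¬ c.IsRoot r := by
        intro r hr
        exact hroot r (by simp [Polynomial.IsRoot, hr.eq_zero])
      have hclt : c.natDegree < n := by omega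
      have := ih c.natDegree hclt c rfl hc0 hcroot
      rw [hdc, hqd]
      exact even_two.add this

/-- If `x₀, x₁, x₂, x₃ ∈ ℝ[t]` are coprime, then
`deg gcd(x₀, x₁² + x₂² + x₃²)` is even (the circularity is an integer). -/
theorem circularity_is_integer (x₀ x₁ x₂ x₃ : ℝ[X])
    (hred : (gcd (gcd (gcd x₀ x₁) x₂) x₃).degree = 0) :
    Even (gcd x₀ (x₁ ^ 2 + x₂ ^ 2 + x₃ ^ 2)).natDegree := by
  set g := gcd x₀ (x₁ ^ 2 + x₂ ^ 2 + x₃ ^ 2) with hg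
  by_cases hg0 : g = 0
  · rw [hg0]; simp
  apply even_natDegree_of_no_real_root g.natDegree g rfl hg0
  intro r hr
  -- r is a root of x₀ and of the sum of squares
  have hd0 : g ∣ x₀ := gcd_dvd_left _ _
  have hds : g ∣ x₁ ^ 2 + x₂ ^ 2 + x₃ ^ 2 := gcd_dvd_right _ _
  have hx0 : x₀.eval r = 0 :=
    Polynomial.eval_eq_zero_of_dvd_of_eval_eq_zero hd0 hr.eq_zero
  have hsum : x₁.eval r ^ 2 + x₂.eval r ^ 2 + x₃.eval r ^ 2 = 0 := by
    have := Polynomial.eval_eq_zero_of_dvd_of_eval_eq_zero hds hr.eq_zero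
    simpa using this
  have h1 : x₁.eval r = 0 := by nlinarith [sq_nonneg (x₁.eval r), sq_nonneg (x₂.eval r), sq_nonneg (x₃.eval r)]
  have h2 : x₂.eval r = 0 := by nlinarith [sq_nonneg (x₁.eval r), sq_nonneg (x₂.eval r), sq_nonneg (x₃.eval r)]
  have h3 : x₃.eval r = 0 := by nlinarith [sq_nonneg (x₁.eval r), sq_nonneg (x₂.eval r), sq_nonneg (x₃.eval r)]
  -- then X - C r divides the gcd of all four
  have hX : (X - C r) ∣ gcd (gcd (gcd x₀ x₁) x₂) x₃ := by
    refine dvd_gcd (dvd_gcd (dvd_gcd ?_ ?_) ?_) ?_ <;>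
      rw [Polynomial.dvd_iff_isRoot] <;> assumption
  have := Polynomial.degree_le_of_dvd hX (fun h => by simp [h] at hred)
  rw [hred] at this
  have hX1 : (X - C r : ℝ[X]).degree = 1 := Polynomial.degree_X_sub_C r
  rw [hX1] at this
  exact absurd this (by norm_num)
end
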